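/- Let X be a topological space and φ, ψ ∈ C_b(X). Then (φ + ψ)^× = φ^× ◇ ψ^× on C_b(X): for all θ ∈ C_b(X), sup_x(θ(x) − φ(x) − ψ(x)) = inf_{ξ∈C_b(X)}[sup_x(ξ(x) − φ(x)) + sup_x(θ(x) − ξ(x) − ψ(x))]. -/

import Mathlib

open BoundedContinuousFunction

theorem conjugate_add_eq_infConv_of_bounded_continuous
    {X : Type*} [TopologicalSpace X] (φ ψ θ : X →ᵇ ℝ) :
    (⨆ x : X, ((θ x - φ x - ψ x : ℝ) : EReal)) =
      ⨅ ξ : X →ᵇ ℝ,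
        ((⨆ x : X, ((ξ x - φ x : ℝ) : EReal)) +
          ⨆ x : X, ((θ x - ξ x - ψ x : ℝ) : EReal)) := by
  apply le_antisymm
  · refine le_iInf fun ξ => ?_
    refine iSup_le fun x => ?_
    calc ((θ x - φ x - ψ x : ℝ) : EReal)
        = ((ξ x - φ x : ℝ) : EReal) + ((θ x - ξ x - ψ x : ℝ) : EReal) := by
          rw [← EReal.coe_add]; congr 1; ring
      _ ≤ _ := add_le_add (le_iSup (fun x => ((ξ x - φ x : ℝ) : EReal)) x)
          (le_iSup (fun x => ((θ x - ξ x - ψ x : ℝ) : EReal)) x)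
  · refine iInf_le_of_le (θ - ψ) ?_
    rcases isEmpty_or_nonempty X with h | h
    · simp
    · have h1 : (⨆ x : X, (((θ - ψ) x - φ x : ℝ) : EReal)) =
          ⨆ x : X, ((θ x - φ x - ψ x : ℝ) : EReal) := by
        congr 1; funext x; exact congrArg Real.toEReal (by rw [BoundedContinuousFunction.sub_apply]; ring)
      have h2 : (⨆ x : X, ((θ x - (θ - ψ) x - ψ x : ℝ) : EReal)) = 0 := by
        simp
      rw [h1, h2, add_zero]
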